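/- The cyclic statistics Pk and cPk are equivalent: for all permutations π and σ of the same length, the multiset {{Pk π̄ : π̄ ∈ [π]}} equals the multiset {{Pk σ̄ : σ̄ ∈ [σ]}} if and only if the multiset {{cPk π̄ : π̄ ∈ [π]}} equals the multiset {{cPk σ̄ : σ̄ ∈ [σ]}}. -/

import Mathlib

/-- A permutation: a list of distinct positive integers. -/
def IsPerm (π : List ℕ) : Prop := π.Nodup ∧ ∀ x ∈ π, 0 < x

/-- The descent set `Des π = {i ∈ {1,…,n−1} : π_i > π_{i+1}}` (1-based indexing). -/
def Des (π : List ℕ) : Finset ℕ :=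
  (Finset.Icc 1 (π.length - 1)).filter fun i => π.getD i 0 < π.getD (i - 1) 0

/-- The descent number. -/
def des (π : List ℕ) : ℕ := (Des π).card

/-- The major index. -/
def maj (π : List ℕ) : ℕ := ∑ i ∈ Des π, i

/-- The cyclic descent set `cDes π = {i ∈ {1,…,n} : π_i > π_{i+1}}`, indices mod `n`. -/
def cDes (π : List ℕ) : Finset ℕ :=
  (Finset.Icc 1 π.length).filter fun i => π.getD (i % π.length) 0 < π.getD (i - 1) 0

/-- The cyclic descent number. -/
def cdes (π : List ℕ) : ℕ := (cDes π).card

/-- The cyclic major index. -/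
def cmaj (π : List ℕ) : ℕ := ∑ i ∈ cDes π, i

/-- The peak set `Pk π = {i ∈ {2,…,n−1} : π_{i−1} < π_i > π_{i+1}}` (1-based indexing). -/
def Pk (π : List ℕ) : Finset ℕ :=
  (Finset.Icc 2 (π.length - 1)).filter fun i =>
    π.getD (i - 2) 0 < π.getD (i - 1) 0 ∧ π.getD i 0 < π.getD (i - 1) 0

/-- The peak number. -/
def pk (π : List ℕ) : ℕ := (Pk π).card

/-- The cyclic peak set `cPk π = {i ∈ {1,…,n} : π_{i−1} < π_i > π_{i+1}}`, indices mod `n`. -/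
def cPk (π : List ℕ) : Finset ℕ :=
  (Finset.Icc 1 π.length).filter fun i =>
    π.getD ((i + π.length - 2) % π.length) 0 < π.getD (i - 1) 0 ∧
      π.getD (i % π.length) 0 < π.getD (i - 1) 0

/-- The cyclic peak number. -/
def cpk (π : List ℕ) : ℕ := (cPk π).card

/-- The cyclic valley set `cVal π = {i ∈ {1,…,n} : π_{i−1} > π_i < π_{i+1}}`, indices mod `n`. -/
def cVal (π : List ℕ) : Finset ℕ :=
  (Finset.Icc 1 π.length).filter fun i =>
    π.getD (i - 1) 0 < π.getD ((i + π.length - 2) % π.length) 0 ∧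
      π.getD (i - 1) 0 < π.getD (i % π.length) 0

/-- The cyclic valley number. -/
def cval (π : List ℕ) : ℕ := (cVal π).card

/-- The distribution of a linear statistic `st` over the `n` rotations of `π`,
i.e. the multiset-valued cyclic statistic induced by `st`, evaluated at `[π]`. -/
def cycStat {A : Type*} (st : List ℕ → A) (π : List ℕ) : Multiset A :=
  (Multiset.range π.length).map fun i => st (π.rotate i)

/-- `τ` is a (linear) shuffle of `π` and `σ`. -/
def IsShuffle (π σ τ : List ℕ) : Prop :=
  π.Sublist τ ∧ σ.Sublist τ ∧ τ.length = π.length + σ.length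

/-- `[τ]` is a cyclic shuffle of `[π]` and `[σ]`: some rotation of `τ` is a shuffle
of some rotation of `π` and some rotation of `σ`. -/
def IsCyclicShuffle (π σ τ : List ℕ) : Prop :=
  ∃ i j k, IsShuffle (π.rotate i) (σ.rotate j) (τ.rotate k)

/-- The set of cyclic shuffles of `[π]` and `[σ]` (as elements of `Cycle ℕ`, so that each
cyclic shuffle is counted once) on which the statistic `cst` takes the value `v`. -/
def cycShuffleFiber {A : Type*} (cst : List ℕ → A) (π σ : List ℕ) (v : A) : Set (Cycle ℕ) :=
  {c : Cycle ℕ | ∃ τ : List ℕ, (↑τ : Cycle ℕ) = c ∧ IsCyclicShuffle π σ τ ∧ cst τ = v}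

/-- A (rotation-invariant) statistic `cst` is cyclic shuffle-compatible if the distribution
of `cst` over the set of cyclic shuffles of `[π]` and `[σ]` (each cyclic shuffle counted
once) depends only on `cst π`, `cst σ`, `|π|` and `|σ|`. -/
def CyclicShuffleCompatible {A : Type*} (cst : List ℕ → A) : Prop :=
  ∀ π σ π' σ' : List ℕ, IsPerm π → IsPerm σ → IsPerm π' → IsPerm σ' →
    π.Disjoint σ → π'.Disjoint σ' →
    π.length = π'.length → σ.length = σ'.length →
    cst π = cst π' → cst σ = cst σ' →
    ∀ v : A, (cycShuffleFiber cst π σ v).ncard = (cycShuffleFiber cst π' σ' v).ncard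


section PkCPkAux

/-- 0-based cyclic peak set of a list. -/
def cS (l : List ℕ) : Finset ℕ :=
  (Finset.range l.length).filter fun j =>
    l.getD ((j + l.length - 1) % l.length) 0 < l.getD j 0 ∧
    l.getD ((j + 1) % l.length) 0 < l.getD j 0

theorem cS_lt {l : List ℕ} {j : ℕ} (h : j ∈ cS l) : j < l.length := by
  simp only [cS, Finset.mem_filter, Finset.mem_range] at h; exact h.1

theorem getD_rotate (l : List ℕ) (r m : ℕ) (hm : m < l.length) :
    (l.rotate r).getD m 0 = l.getD ((m + r) % l.length) 0 := by
  have h1 : m < (l.rotate r).length := by simpa using hm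
  have h2 : (m + r) % l.length < l.length := Nat.mod_lt _ (by omega)
  rw [List.getD_eq_getElem _ _ h1, List.getD_eq_getElem _ _ h2]
  exact List.getElem_rotate l r m h1

theorem mem_cPk_rotate {l : List ℕ} (hn : 0 < l.length) (r i : ℕ) :
    i ∈ cPk (l.rotate r) ↔ (1 ≤ i ∧ i ≤ l.length) ∧ (i - 1 + r) % l.length ∈ cS l := by
  set n := l.length with hnl
  simp only [cPk, cS, Finset.mem_filter, Finset.mem_Icc, Finset.mem_range, List.length_rotate,
    ← hnl]
  by_cases hi : 1 ≤ i ∧ i ≤ n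
  · obtain ⟨hi1, hi2⟩ := hi
    have e1 : (l.rotate r).getD ((i + n - 2) % n) 0
        = l.getD (((i - 1 + r) % n + n - 1) % n) 0 := by
      rw [getD_rotate l r _ (Nat.mod_lt _ hn)]
      congr 1
      rw [Nat.mod_add_mod, Nat.add_sub_assoc (by omega : 1 ≤ n), Nat.mod_add_mod]
      congr 1
      omega
    have e2 : (l.rotate r).getD (i - 1) 0 = l.getD ((i - 1 + r) % n) 0 :=
      getD_rotate l r _ (by omega)
    have e3 : (l.rotate r).getD (i % n) 0 = l.getD (((i - 1 + r) % n + 1) % n) 0 := by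
      rw [getD_rotate l r _ (Nat.mod_lt _ hn)]
      congr 1
      rw [Nat.mod_add_mod, Nat.mod_add_mod]
      congr 1
      omega
    rw [e1, e2, e3]
    have := Nat.mod_lt (i - 1 + r) hn
    tauto
  · exact iff_of_false (fun h => hi ⟨h.1.1, h.1.2⟩) (fun h => hi ⟨h.1.1, h.1.2⟩)

theorem mem_Pk_iff (l : List ℕ) (i : ℕ) :
    i ∈ Pk l ↔ i ∈ cPk l ∧ 2 ≤ i ∧ i ≤ l.length - 1 := by
  set n := l.length with hnl
  simp only [Pk, cPk, Finset.mem_filter, Finset.mem_Icc, ← hnl]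
  by_cases hi : 2 ≤ i ∧ i ≤ n - 1
  · obtain ⟨hi1, hi2⟩ := hi
    have hn3 : 3 ≤ n := by omega
    have e1 : (i + n - 2) % n = i - 2 := by
      have : i + n - 2 = (i - 2) + n := by omega
      rw [this, Nat.add_mod_right, Nat.mod_eq_of_lt (by omega)]
    have e2 : i % n = i := Nat.mod_eq_of_lt (by omega)
    rw [e1, e2]
    constructor
    · rintro ⟨_, hA, hB⟩; exact ⟨⟨⟨by omega, by omega⟩, hA, hB⟩, by omega, by omega⟩
    · rintro ⟨⟨_, hA, hB⟩, _⟩; exact ⟨⟨by omega, by omega⟩, hA, hB⟩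
  · exact iff_of_false (fun h => hi ⟨h.1.1, h.1.2⟩) (fun h => hi ⟨h.2.1, h.2.2⟩)

theorem Pk_eq_filter (l : List ℕ) :
    Pk l = (cPk l).filter (fun i => 2 ≤ i ∧ i ≤ l.length - 1) := by
  ext i
  simp only [mem_Pk_iff, Finset.mem_filter]

theorem card_cPk_rotate {l : List ℕ} (hn : 0 < l.length) (r : ℕ) :
    (cPk (l.rotate r)).card = (cS l).card := by
  rw [← List.rotate_mod]
  have hr : r % l.length < l.length := Nat.mod_lt r hn
  revert hr
  generalize r % l.length = s
  intro hs
  apply Finset.card_nbij' (fun i => (i - 1 + s) % l.length)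
    (fun j => (j + (l.length - s)) % l.length + 1)
  · intro i hi
    exact ((mem_cPk_rotate hn s i).mp hi).2
  · intro j hj
    have hjn : j < l.length := cS_lt hj
    simp only [Finset.mem_coe]
    rw [mem_cPk_rotate hn]
    have hmod : ((j + (l.length - s)) % l.length + 1 - 1 + s) % l.length = j := by
      rw [Nat.add_sub_cancel, Nat.mod_add_mod]
      have he : j + (l.length - s) + s = j + l.length := by omega
      rw [he, Nat.add_mod_right, Nat.mod_eq_of_lt hjn]
    rw [hmod]
    exact ⟨⟨by omega, by have := Nat.mod_lt (j + (l.length - s)) hn; omega⟩, hj⟩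
  · intro i hi
    obtain ⟨⟨hi1, hi2⟩, _⟩ := (mem_cPk_rotate hn s i).mp hi
    dsimp only
    rw [Nat.mod_add_mod]
    have he : i - 1 + s + (l.length - s) = (i - 1) + l.length := by omega
    rw [he, Nat.add_mod_right, Nat.mod_eq_of_lt (by omega)]
    omega
  · intro j hj
    have hjn : j < l.length := cS_lt hj
    dsimp only
    rw [Nat.add_sub_cancel, Nat.mod_add_mod]
    have he : j + (l.length - s) + s = j + l.length := by omega
    rw [he, Nat.add_mod_right, Nat.mod_eq_of_lt hjn]

/-- Shift lemma: if the 0-based cyclic peak sets agree up to a shift, the `cPk`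
distributions over rotations agree. -/
theorem cycStat_aux {l m : List ℕ} (hlen : m.length = l.length)
    (hn : 0 < l.length) (t : ℕ)
    (hS : ∀ j < l.length, (j ∈ cS m ↔ (j + t) % l.length ∈ cS l)) :
    (Multiset.range l.length).map (fun i => cPk (l.rotate i))
      = (Multiset.range m.length).map (fun i => cPk (m.rotate i)) := by
  have hm0 : 0 < m.length := by omega
  have key : ∀ r, cPk (m.rotate r) = cPk (l.rotate ((r + t) % l.length)) := by
    intro r
    ext i
    rw [List.rotate_mod, mem_cPk_rotate hm0, mem_cPk_rotate hn, hlen]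
    constructor
    · rintro ⟨hi, hmem⟩
      refine ⟨hi, ?_⟩
      have h2 := (hS _ (Nat.mod_lt _ hn)).mp hmem
      rw [Nat.mod_add_mod] at h2
      rw [← Nat.add_assoc]
      exact h2
    · rintro ⟨hi, hmem⟩
      refine ⟨hi, ?_⟩
      apply (hS _ (Nat.mod_lt _ hn)).mpr
      rw [Nat.mod_add_mod]
      rw [← Nat.add_assoc] at hmem
      exact hmem
  have hinj : Set.InjOn (fun r => (r + t) % l.length) (Finset.range l.length) := by
    intro a ha b hb hab
    simp only [Finset.coe_range, Set.mem_Iio] at ha hb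
    have : a % l.length = b % l.length := Nat.ModEq.add_right_cancel' t hab
    rwa [Nat.mod_eq_of_lt ha, Nat.mod_eq_of_lt hb] at this
  have hperm : (Multiset.range l.length).map (fun r => (r + t) % l.length)
      = Multiset.range l.length := by
    have himg : (Finset.range l.length).image (fun r => (r + t) % l.length)
        = Finset.range l.length := by
      apply Finset.eq_of_subset_of_card_le
      · intro x hx
        simp only [Finset.mem_image] at hx
        obtain ⟨a, _, rfl⟩ := hx
        simp [Nat.mod_lt _ hn]
      · rw [Finset.card_image_of_injOn hinj]
    calc (Multiset.range l.length).map (fun r => (r + t) % l.length)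
        = ((Finset.range l.length).image (fun r => (r + t) % l.length)).val := by
          rw [Finset.image_val_of_injOn hinj, Finset.range_val]
      _ = Multiset.range l.length := by rw [himg, Finset.range_val]
  rw [hlen]
  rw [Multiset.map_congr rfl (fun r _ => key r)]
  calc (Multiset.range l.length).map (fun i => cPk (l.rotate i))
      = ((Multiset.range l.length).map (fun r => (r + t) % l.length)).map
          (fun i => cPk (l.rotate i)) := by rw [hperm]
    _ = (Multiset.range l.length).map (fun r => cPk (l.rotate ((r + t) % l.length))) := by
        rw [Multiset.map_map]; rfl

theorem cS_noadj {l : List ℕ} {j : ℕ} (hj : j ∈ cS l)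
    (hj2 : (j + 1) % l.length ∈ cS l) : False := by
  have hjn : j < l.length := cS_lt hj
  simp only [cS, Finset.mem_filter, Finset.mem_range] at hj hj2
  have e : ((j + 1) % l.length + l.length - 1) % l.length = j := by
    rw [Nat.add_sub_assoc (by omega), Nat.mod_add_mod]
    have : j + 1 + (l.length - 1) = j + l.length := by omega
    rw [this, Nat.add_mod_right, Nat.mod_eq_of_lt hjn]
  rw [e] at hj2
  exact absurd hj2.2.1 (not_lt.mpr (le_of_lt hj.2.2))

theorem cS_nonempty {l : List ℕ} (hn : 2 ≤ l.length) (hnd : l.Nodup) :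
    (cS l).Nonempty := by
  obtain ⟨j0, hj0, hmax⟩ := Finset.exists_max_image (Finset.range l.length)
    (fun j => l.getD j 0) ⟨0, by simp; omega⟩
  simp only [Finset.mem_range] at hj0
  have hgetne : ∀ a, a < l.length → a ≠ j0 → l.getD a 0 ≠ l.getD j0 0 := by
    intro a ha hne
    rw [List.getD_eq_getElem _ _ ha, List.getD_eq_getElem _ _ hj0]
    intro heq
    exact hne ((List.Nodup.getElem_inj_iff hnd).mp heq)
  have hstrict : ∀ a, a < l.length → a ≠ j0 → l.getD a 0 < l.getD j0 0 := by
    intro a ha hne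
    exact lt_of_le_of_ne (hmax a (Finset.mem_range.mpr ha)) (hgetne a ha hne)
  refine ⟨j0, ?_⟩
  simp only [cS, Finset.mem_filter, Finset.mem_range]
  refine ⟨hj0, ?_, ?_⟩
  · apply hstrict _ (Nat.mod_lt _ (by omega))
    have : (j0 + l.length - 1) % l.length = if j0 = 0 then l.length - 1 else j0 - 1 := by
      split_ifs with h
      · subst h
        rw [Nat.zero_add, Nat.mod_eq_of_lt (by omega)]
      · have : j0 + l.length - 1 = (j0 - 1) + l.length := by omega
        rw [this, Nat.add_mod_right, Nat.mod_eq_of_lt (by omega)]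
    rw [this]
    split_ifs with h <;> omega
  · apply hstrict _ (Nat.mod_lt _ (by omega))
    have : (j0 + 1) % l.length = if j0 + 1 = l.length then 0 else j0 + 1 := by
      split_ifs with h
      · rw [h, Nat.mod_self]
      · rw [Nat.mod_eq_of_lt (by omega)]
    rw [this]
    split_ifs with h <;> omega

theorem cS_parity {l : List ℕ} (hn : 2 ≤ l.length) (hnd : l.Nodup)
    (hcov : ∀ r < l.length, r ∈ cS l ∨ (r + l.length - 1) % l.length ∈ cS l) :
    2 ∣ l.length ∧ ∃ a < 2, ∀ j < l.length, (j ∈ cS l ↔ j % 2 = a) := by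
  have hn0 : 0 < l.length := by omega
  have step : ∀ j, j ∈ cS l → (j + 2) % l.length ∈ cS l := by
    intro j hj
    rcases hcov ((j + 2) % l.length) (Nat.mod_lt _ hn0) with h | h
    · exact h
    · exfalso
      apply cS_noadj hj
      have e : ((j + 2) % l.length + l.length - 1) % l.length = (j + 1) % l.length := by
        rw [Nat.add_sub_assoc (by omega), Nat.mod_add_mod]
        have : j + 2 + (l.length - 1) = (j + 1) + l.length := by omega
        rw [this, Nat.add_mod_right]
      rw [e] at h
      exact h
  obtain ⟨j0, hj0⟩ := cS_nonempty hn hnd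
  have hj0n : j0 < l.length := cS_lt hj0
  have iter : ∀ k, (j0 + 2 * k) % l.length ∈ cS l := by
    intro k
    induction k with
    | zero => simpa [Nat.mod_eq_of_lt hj0n] using hj0
    | succ k ih =>
      have := step _ ih
      rw [Nat.mod_add_mod] at this
      have e : j0 + 2 * k + 2 = j0 + 2 * (k + 1) := by omega
      rwa [e] at this
  have odd_not : ∀ k, (j0 + 2 * k + 1) % l.length ∉ cS l := by
    intro k h
    apply cS_noadj (iter k)
    rw [Nat.mod_add_mod]
    exact h
  have heven : 2 ∣ l.length := by
    by_contra hodd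
    obtain ⟨m, hm⟩ : ∃ m, l.length = 2 * m + 1 := ⟨l.length / 2, by omega⟩
    apply odd_not m
    have : j0 + 2 * m + 1 = j0 + l.length := by omega
    rw [this, Nat.add_mod_right, Nat.mod_eq_of_lt hj0n]
    exact hj0
  refine ⟨heven, j0 % 2, by omega, ?_⟩
  intro j hjn
  constructor
  · intro hj
    by_contra hpar
    obtain ⟨k, hk⟩ : ∃ k, j0 + 2 * k + 1 = j + l.length := by
      obtain ⟨c, hc⟩ := heven
      refine ⟨(j + l.length - j0 - 1) / 2, ?_⟩
      omega
    apply odd_not k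
    rw [hk, Nat.add_mod_right, Nat.mod_eq_of_lt hjn]
    exact hj
  · intro hpar
    obtain ⟨k, hk⟩ : ∃ k, j0 + 2 * k = j + l.length := by
      obtain ⟨c, hc⟩ := heven
      refine ⟨(j + l.length - j0) / 2, ?_⟩
      omega
    have := iter k
    rwa [hk, Nat.add_mod_right, Nat.mod_eq_of_lt hjn] at this

theorem Pk_rotate_full {l : List ℕ} {r : ℕ} (hn : 3 ≤ l.length) (hr : r < l.length)
    (h1 : r ∉ cS l) (h2 : (r + l.length - 1) % l.length ∉ cS l) :
    Pk (l.rotate r) = cPk (l.rotate r) := by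
  rw [Pk_eq_filter]
  apply Finset.filter_true_of_mem
  intro i hi
  obtain ⟨⟨hi1, hi2⟩, hmem⟩ := (mem_cPk_rotate (by omega) r i).mp hi
  rw [List.length_rotate]
  have hne1 : i ≠ 1 := by
    rintro rfl
    rw [show (1 - 1 + r) % l.length = r from by rw [Nat.zero_add]; exact Nat.mod_eq_of_lt hr]
      at hmem
    exact h1 hmem
  have hnen : i ≠ l.length := by
    rintro rfl
    rw [show (l.length - 1 + r) % l.length = (r + l.length - 1) % l.length from by
      congr 1; omega] at hmem
    exact h2 hmem
  omega

theorem no_end_of_Pk_full {l : List ℕ} {r : ℕ} (hn : 3 ≤ l.length) (hr : r < l.length)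
    (hfull : Pk (l.rotate r) = cPk (l.rotate r)) :
    r ∉ cS l ∧ (r + l.length - 1) % l.length ∉ cS l := by
  constructor
  · intro hmem
    have h1 : (1 : ℕ) ∈ cPk (l.rotate r) := by
      rw [mem_cPk_rotate (by omega)]
      refine ⟨⟨le_refl 1, by omega⟩, ?_⟩
      rw [Nat.zero_add, Nat.mod_eq_of_lt hr]
      exact hmem
    rw [← hfull, mem_Pk_iff] at h1
    omega
  · intro hmem
    have h1 : l.length ∈ cPk (l.rotate r) := by
      rw [mem_cPk_rotate (by omega)]
      refine ⟨⟨by omega, le_refl _⟩, ?_⟩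
      rw [show l.length - 1 + r = r + l.length - 1 from by omega]
      exact hmem
    rw [← hfull, mem_Pk_iff] at h1
    rw [List.length_rotate] at h1
    omega

theorem two_mem_Pk_rotate {l : List ℕ} (hn : 3 ≤ l.length) (r : ℕ) :
    2 ∈ Pk (l.rotate r) ↔ (1 + r) % l.length ∈ cS l := by
  rw [mem_Pk_iff, mem_cPk_rotate (by omega), List.length_rotate]
  constructor
  · rintro ⟨⟨_, h⟩, _⟩; exact h
  · intro h; exact ⟨⟨⟨by omega, by omega⟩, h⟩, by omega, by omega⟩

theorem countP_two {l : List ℕ} (hn : 3 ≤ l.length) :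
    Multiset.countP (fun P => 2 ∈ P)
      ((Multiset.range l.length).map (fun i => Pk (l.rotate i))) = (cS l).card := by
  rw [Multiset.countP_map]
  have e1 : Multiset.filter (fun a => 2 ∈ Pk (l.rotate a)) (Multiset.range l.length)
      = ((Finset.range l.length).filter (fun a => (1 + a) % l.length ∈ cS l)).val := by
    rw [← Finset.range_val, Finset.filter_val]
    apply Multiset.filter_congr
    intro r hr
    rw [two_mem_Pk_rotate hn]
  rw [e1]
  have e2 : ((Finset.range l.length).filter (fun a => (1 + a) % l.length ∈ cS l)).val.card
      = ((Finset.range l.length).filter (fun a => (1 + a) % l.length ∈ cS l)).card := rfl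
  rw [e2]
  apply Finset.card_nbij' (fun r => (1 + r) % l.length)
    (fun j => (j + (l.length - 1)) % l.length)
  · intro a ha
    simp only [Finset.mem_coe, Finset.mem_filter] at ha
    exact ha.2
  · intro j hj
    have hjn : j < l.length := cS_lt hj
    simp only [Finset.mem_coe, Finset.mem_filter, Finset.mem_range]
    refine ⟨Nat.mod_lt _ (by omega), ?_⟩
    rw [Nat.add_mod_mod]
    rw [show 1 + (j + (l.length - 1)) = j + l.length from by omega, Nat.add_mod_right,
      Nat.mod_eq_of_lt hjn]
    exact hj
  · intro a ha
    simp only [Finset.mem_coe, Finset.mem_filter, Finset.mem_range] at ha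
    dsimp only
    rw [Nat.mod_add_mod]
    rw [show 1 + a + (l.length - 1) = a + l.length from by omega, Nat.add_mod_right,
      Nat.mod_eq_of_lt ha.1]
  · intro j hj
    have hjn : j < l.length := cS_lt hj
    dsimp only
    rw [Nat.add_mod_mod]
    rw [show 1 + (j + (l.length - 1)) = j + l.length from by omega, Nat.add_mod_right,
      Nat.mod_eq_of_lt hjn]

theorem cS_one {l : List ℕ} (h : l.length = 1) : cS l = ∅ := by
  ext j
  simp only [cS, h, Finset.mem_filter, Finset.mem_range, Finset.notMem_empty, iff_false]
  rintro ⟨hj, h1, -⟩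
  interval_cases j
  simp at h1

theorem cS_two {l : List ℕ} (h : l.length = 2) (hnd : l.Nodup) :
    ∃ j0 < 2, cS l = {j0} := by
  obtain ⟨a, b, rfl⟩ := List.length_eq_two.mp h
  have hab : a ≠ b := by simp at hnd; exact hnd
  rcases Nat.lt_or_ge a b with hlt | hge
  · refine ⟨1, by omega, ?_⟩
    ext j
    simp only [cS, Finset.mem_filter, Finset.mem_range, Finset.mem_singleton,
      List.length_cons, List.length_nil]
    constructor
    · rintro ⟨hj, h1, h2⟩
      interval_cases j
      · simp [List.getD] at h1 h2
        omega
      · rfl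
    · rintro rfl
      refine ⟨by omega, ?_, ?_⟩ <;> simp [List.getD] <;> omega
  · have hlt : b < a := by omega
    refine ⟨0, by omega, ?_⟩
    ext j
    simp only [cS, Finset.mem_filter, Finset.mem_range, Finset.mem_singleton,
      List.length_cons, List.length_nil]
    constructor
    · rintro ⟨hj, h1, h2⟩
      interval_cases j
      · rfl
      · simp [List.getD] at h1 h2
        omega
    · rintro rfl
      refine ⟨by omega, ?_, ?_⟩ <;> simp [List.getD] <;> omega

theorem shift_of_cPk_rotate_eq {l m : List ℕ} (hm : m.length = l.length)
    (hn : 0 < l.length) {r r' : ℕ} (hr' : r' < l.length)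
    (hEq : cPk (m.rotate r') = cPk (l.rotate r)) :
    ∀ j < l.length, j ∈ cS m ↔ (j + (l.length - r' + r)) % l.length ∈ cS l := by
  intro j hj
  have hilt : (j + (l.length - r')) % l.length < l.length := Nat.mod_lt _ hn
  have e1 : ((j + (l.length - r')) % l.length + 1 - 1 + r') % m.length = j := by
    rw [hm, Nat.add_sub_cancel, Nat.mod_add_mod,
      show j + (l.length - r') + r' = j + l.length from by omega, Nat.add_mod_right,
      Nat.mod_eq_of_lt hj]
  have e2 : ((j + (l.length - r')) % l.length + 1 - 1 + r) % l.length
      = (j + (l.length - r' + r)) % l.length := by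
    rw [Nat.add_sub_cancel, Nat.mod_add_mod]
    congr 1
    omega
  constructor
  · intro hjS
    have h1 : (j + (l.length - r')) % l.length + 1 ∈ cPk (m.rotate r') := by
      rw [mem_cPk_rotate (by omega) r']
      exact ⟨⟨by omega, by omega⟩, by rw [e1]; exact hjS⟩
    rw [hEq, mem_cPk_rotate hn r] at h1
    rw [← e2]
    exact h1.2
  · intro hjS
    have h1 : (j + (l.length - r')) % l.length + 1 ∈ cPk (l.rotate r) := by
      rw [mem_cPk_rotate hn r]
      exact ⟨⟨by omega, by omega⟩, by rw [e2]; exact hjS⟩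
    rw [← hEq, mem_cPk_rotate (by omega) r'] at h1
    have := h1.2
    rwa [e1] at this

end PkCPkAux

/-- The cyclic statistics `Pk` and `cPk` are equivalent. -/
theorem Pk_cPk_equivalent (π σ : List ℕ) (hπ : IsPerm π) (hσ : IsPerm σ)
    (hlen : π.length = σ.length) :
    cycStat Pk π = cycStat Pk σ ↔ cycStat cPk π = cycStat cPk σ := by
  constructor
  · intro h
    unfold cycStat at h ⊢
    have hm : σ.length = π.length := hlen.symm
    by_cases h0 : π.length = 0
    · rw [h0, hm.trans h0]
      simp
    by_cases h1 : π.length = 1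
    · apply cycStat_aux hm (by omega) 0
      intro j hj
      rw [cS_one (hm.trans h1), cS_one h1]
      simp
    by_cases h2 : π.length = 2
    · obtain ⟨jp, hjp, hSp⟩ := cS_two h2 hπ.1
      obtain ⟨js, hjs, hSs⟩ := cS_two (hm.trans h2) hσ.1
      apply cycStat_aux hm (by omega) (jp + 2 - js)
      intro j hj
      rw [h2] at hj ⊢
      rw [hSs, hSp]
      simp only [Finset.mem_singleton]
      omega
    have hn3 : 3 ≤ π.length := by omega
    have hσ3 : 3 ≤ σ.length := by omega
    have hp : (cS π).card = (cS σ).card := by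
      have h' := congrArg (Multiset.countP (fun P => 2 ∈ P)) h
      rwa [countP_two hn3, countP_two hσ3] at h'
    by_cases hcase : ∃ r, r < π.length ∧ r ∉ cS π ∧ (r + π.length - 1) % π.length ∉ cS π
    · obtain ⟨r, hr, hr1, hr2⟩ := hcase
      have hfull := Pk_rotate_full hn3 hr hr1 hr2
      have hmem : Pk (π.rotate r) ∈ (Multiset.range σ.length).map
          (fun i => Pk (σ.rotate i)) := by
        rw [← h]
        exact Multiset.mem_map.mpr ⟨r, Multiset.mem_range.mpr hr, rfl⟩
      obtain ⟨r', hr', heq⟩ := Multiset.mem_map.mp hmem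
      rw [Multiset.mem_range] at hr'
      have hcard : (cPk (σ.rotate r')).card ≤ (Pk (σ.rotate r')).card := by
        rw [heq, hfull, card_cPk_rotate (by omega : 0 < σ.length) r',
          card_cPk_rotate (by omega : 0 < π.length) r]
        omega
      have hfullσ : Pk (σ.rotate r') = cPk (σ.rotate r') :=
        Finset.eq_of_subset_of_card_le (by rw [Pk_eq_filter]; exact Finset.filter_subset _ _)
          hcard
      have hEq : cPk (σ.rotate r') = cPk (π.rotate r) := by
        rw [← hfullσ, heq, hfull]
      apply cycStat_aux hm (by omega) (π.length - r' + r)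
      exact shift_of_cPk_rotate_eq hm (by omega) (by omega) hEq
    · push_neg at hcase
      have hcovπ : ∀ r < π.length, r ∈ cS π ∨ (r + π.length - 1) % π.length ∈ cS π := by
        intro r hr
        by_cases hx : r ∈ cS π
        · exact Or.inl hx
        · exact Or.inr (hcase r hr hx)
      have hcovσ : ∀ r < σ.length, r ∈ cS σ ∨ (r + σ.length - 1) % σ.length ∈ cS σ := by
        intro r' hr'
        by_contra hns
        push_neg at hns
        obtain ⟨hs1, hs2⟩ := hns
        have hfullσ := Pk_rotate_full hσ3 hr' hs1 hs2
        have hmem : Pk (σ.rotate r') ∈ (Multiset.range π.length).map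
            (fun i => Pk (π.rotate i)) := by
          rw [h]
          exact Multiset.mem_map.mpr ⟨r', Multiset.mem_range.mpr hr', rfl⟩
        obtain ⟨r'', hr'', heq⟩ := Multiset.mem_map.mp hmem
        rw [Multiset.mem_range] at hr''
        have hcard : (cPk (π.rotate r'')).card ≤ (Pk (π.rotate r'')).card := by
          rw [heq, hfullσ, card_cPk_rotate (by omega : 0 < π.length) r'',
            card_cPk_rotate (by omega : 0 < σ.length) r']
          omega
        have hfullπ : Pk (π.rotate r'') = cPk (π.rotate r'') :=
          Finset.eq_of_subset_of_card_le (by rw [Pk_eq_filter]; exact Finset.filter_subset _ _)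
            hcard
        obtain ⟨hc1, hc2⟩ := no_end_of_Pk_full hn3 hr'' hfullπ
        rcases hcovπ r'' hr'' with hx | hx
        · exact hc1 hx
        · exact hc2 hx
      obtain ⟨hdvdπ, aπ, haπ, hchπ⟩ := cS_parity (by omega) hπ.1 hcovπ
      obtain ⟨hdvdσ, aσ, haσ, hchσ⟩ := cS_parity (by omega) hσ.1 hcovσ
      apply cycStat_aux hm (by omega) (aπ + aσ)
      intro j hj
      rw [hchσ j (by omega), hchπ ((j + (aπ + aσ)) % π.length) (Nat.mod_lt _ (by omega))]
      rw [Nat.mod_mod_of_dvd _ hdvdπ]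
      omega
  · intro h
    unfold cycStat at h ⊢
    have e : ∀ (l : List ℕ), l.length = σ.length →
        (Multiset.range l.length).map (fun i => Pk (l.rotate i))
          = ((Multiset.range l.length).map (fun i => cPk (l.rotate i))).map
              (fun s => s.filter (fun i => 2 ≤ i ∧ i ≤ σ.length - 1)) := by
      intro l hl
      rw [Multiset.map_map]
      apply Multiset.map_congr rfl
      intro r hr
      simp only [Function.comp_apply]
      rw [Pk_eq_filter, List.length_rotate, hl]
    rw [e π hlen, e σ rfl, h]
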